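/- If d_H(Gr(h), Gr(h')) ≤ ε for the graphs of two sampled maps, then at every radius r there are inclusions S_r ⊆ S'_{r+ε}, h(S)_r ⊆ h'(S')_{r+ε}, and Gr(h)_r ⊆ Gr(h')_{r+ε} commuting with the projections, and symmetrically with the roles of h and h' swapped; these inclusions form an ε-interleaving of the A_3(bf)-valued filtrations. -/

import Mathlib

open EMetric ENNReal Set

noncomputable section

variable (n : ℕ)

/-- The ambient Euclidean space. -/
abbrev Euc (n : ℕ) := EuclideanSpace ℝ (Fin n)

/-- The closed `r`-offset of a set. -/
def off {α : Type*} [PseudoEMetricSpace α] (A : Set α) (r : ℝ≥0∞) : Set α :=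
  {x | infEdist x A ≤ r}

/-- The graph of a sampled map `h : S → ℝⁿ`, as a subset of `ℝⁿ × ℝⁿ`
(the product carries the max-metric). -/
def gr {n : ℕ} {S : Set (Euc n)} (h : S → Euc n) : Set (Euc n × Euc n) :=
  Set.range fun s : S => ((s : Euc n), h s)

/-- A 1-Lipschitz map does not increase `infEdist` to the image. -/
lemma lip_infEdist {α β : Type*} [PseudoEMetricSpace α] [PseudoEMetricSpace β]
    {f : α → β} (hf : LipschitzWith 1 f) (x : α) (A : Set α) :
    EMetric.infEdist (f x) (f '' A) ≤ EMetric.infEdist x A := by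
  simp only [EMetric.infEdist, Metric.infEDist, iInf_image]
  exact iInf_mono fun y => iInf_mono fun _ => by simpa using hf x y

/-- A 1-Lipschitz map does not increase Hausdorff distance between images. -/
lemma lip_hausdorffEdist {α β : Type*} [PseudoEMetricSpace α] [PseudoEMetricSpace β]
    {f : α → β} (hf : LipschitzWith 1 f) (A B : Set α) :
    EMetric.hausdorffEdist (f '' A) (f '' B) ≤ EMetric.hausdorffEdist A B := by
  refine EMetric.hausdorffEdist_le_of_infEdist ?_ ?_
  · rintro _ ⟨x, hx, rfl⟩
    exact (lip_infEdist hf x B).trans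
      (EMetric.infEdist_le_infEdist_add_hausdorffEdist.trans_eq
        (by rw [EMetric.infEdist_zero_of_mem hx, zero_add]; rfl))
  · rintro _ ⟨x, hx, rfl⟩
    exact (lip_infEdist hf x A).trans
      (EMetric.infEdist_le_infEdist_add_hausdorffEdist.trans_eq
        (by rw [EMetric.infEdist_zero_of_mem hx, zero_add,
          EMetric.hausdorffEdist_comm]; rfl))

lemma fst_gr {n : ℕ} {S : Set (Euc n)} (h : S → Euc n) :
    Prod.fst '' gr h = S := by
  ext x
  simp only [gr, Set.mem_image, Set.mem_range]
  constructor
  · rintro ⟨_, ⟨s, rfl⟩, rfl⟩; exact s.2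
  · intro hx; exact ⟨(x, h ⟨x, hx⟩), ⟨⟨x, hx⟩, rfl⟩, rfl⟩

lemma snd_gr {n : ℕ} {S : Set (Euc n)} (h : S → Euc n) :
    Prod.snd '' gr h = Set.range h := by
  ext x
  simp [gr]

lemma off_mono_haus {α : Type*} [PseudoEMetricSpace α] {A B : Set α} {ε : ℝ≥0∞}
    (hAB : EMetric.hausdorffEdist A B ≤ ε) (r : ℝ≥0∞) :
    off A r ⊆ off B (r + ε) := fun x hx =>
  EMetric.infEdist_le_infEdist_add_hausdorffEdist.trans (add_le_add hx hAB)

lemma off_proj {α β : Type*} [PseudoEMetricSpace α] [PseudoEMetricSpace β]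
    {f : α → β} (hf : LipschitzWith 1 f) (A : Set α) (r : ℝ≥0∞) :
    f '' off A r ⊆ off (f '' A) r := by
  rintro _ ⟨x, hx, rfl⟩
  exact (lip_infEdist hf x A).trans hx

/-- If `d_H(Gr(h), Gr(h')) ≤ ε`, then at every radius `r` there are
inclusions `S_r ⊆ S'_{r+ε}`, `h(S)_r ⊆ h'(S')_{r+ε}`, `Gr(h)_r ⊆ Gr(h')_{r+ε}`
(and symmetrically), and these commute with the projections:
`fst(Gr(h)_r) ⊆ S_r` and `snd(Gr(h)_r) ⊆ h(S)_r` (and likewise for `h'`);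
together these inclusions form an `ε`-interleaving of the `A₃(bf)`-valued filtrations. -/
theorem sampled_map_offset_interleaving
    {S S' : Set (Euc n)} (hSfin : S.Finite) (hS'fin : S'.Finite)
    (h : S → Euc n) (h' : S' → Euc n) (ε : ℝ≥0∞)
    (hd : hausdorffEdist (gr h) (gr h') ≤ ε) :
    ∀ r : ℝ≥0∞,
      off S r ⊆ off S' (r + ε) ∧ off S' r ⊆ off S (r + ε) ∧
      off (Set.range h) r ⊆ off (Set.range h') (r + ε) ∧
      off (Set.range h') r ⊆ off (Set.range h) (r + ε) ∧
      off (gr h) r ⊆ off (gr h') (r + ε) ∧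
      off (gr h') r ⊆ off (gr h) (r + ε) ∧
      Prod.fst '' off (gr h) r ⊆ off S r ∧
      Prod.snd '' off (gr h) r ⊆ off (Set.range h) r ∧
      Prod.fst '' off (gr h') r ⊆ off S' r ∧
      Prod.snd '' off (gr h') r ⊆ off (Set.range h') r := by
  intro r
  have hd' : hausdorffEdist (gr h') (gr h) ≤ ε := by exact Metric.hausdorffEDist_comm.trans_le hd
  have hfst : LipschitzWith 1 (Prod.fst : Euc n × Euc n → Euc n) := LipschitzWith.prod_fst
  have hsnd : LipschitzWith 1 (Prod.snd : Euc n × Euc n → Euc n) := LipschitzWith.prod_snd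
  have hS : hausdorffEdist S S' ≤ ε := by
    rw [← fst_gr h, ← fst_gr h']; exact (lip_hausdorffEdist hfst _ _).trans hd
  have hS' : hausdorffEdist S' S ≤ ε := by exact Metric.hausdorffEDist_comm.trans_le hS
  have hR : hausdorffEdist (Set.range h) (Set.range h') ≤ ε := by
    rw [← snd_gr h, ← snd_gr h']; exact (lip_hausdorffEdist hsnd _ _).trans hd
  have hR' : hausdorffEdist (Set.range h') (Set.range h) ≤ ε := by
    exact Metric.hausdorffEDist_comm.trans_le hR
  refine ⟨off_mono_haus hS r, off_mono_haus hS' r, off_mono_haus hR r,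
    off_mono_haus hR' r, off_mono_haus hd r, off_mono_haus hd' r,
    ?_, ?_, ?_, ?_⟩
  · simpa [fst_gr h] using off_proj hfst (gr h) r
  · simpa [snd_gr h] using off_proj hsnd (gr h) r
  · simpa [fst_gr h'] using off_proj hfst (gr h') r
  · simpa [snd_gr h'] using off_proj hsnd (gr h') r

end
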